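/- Let A = (A₁,…,A_d) be a d-tuple of m×m complex matrices and let P(x) = A₁x₁ + ⋯ + A_dx_d be the corresponding homogeneous linear matrix pencil. Then the left multiplication operator F ↦ PF on m×m-matrix-valued free polynomials has operator norm (with respect to the ℓ² norm ‖·‖₂ on coefficients) equal to ‖A‖_col := ‖A₁*A₁ + ⋯ + A_d*A_d‖^{1/2}. -/

import Mathlib

open scoped BigOperators Kronecker
open Matrix

noncomputable section

/-- Words in the letters `1,…,d`. -/
abbrev Word (d : ℕ) := FreeMonoid (Fin d)

/-- The free algebra `ℂ⟨x₁,…,x_d⟩`, realized as the monoid algebra of the free monoid. -/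
abbrev FreePoly (d : ℕ) := MonoidAlgebra ℂ (Word d)

/-- Squared ℓ² norm of the coefficients of a free polynomial. -/
def FreePoly.normSq {d : ℕ} (p : FreePoly d) : ℝ := p.coeff.sum fun _ c => ‖c‖ ^ 2

/-- ℓ² norm of the coefficients of a free polynomial. -/
def FreePoly.norm2 {d : ℕ} (p : FreePoly d) : ℝ := Real.sqrt p.normSq

/-- `p` has degree at most `n`. -/
def FreePoly.degLE {d : ℕ} (p : FreePoly d) (n : ℕ) : Prop :=
  ∀ w ∈ p.coeff.support, w.toList.length ≤ n

/-- Evaluation of a word at a `d`-tuple of `k × k` matrices: `X^w`. -/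
def wordEval {d k : ℕ} (X : Fin d → Matrix (Fin k) (Fin k) ℂ) (w : Word d) :
    Matrix (Fin k) (Fin k) ℂ :=
  (w.toList.map X).prod

/-- Evaluation of a free polynomial at a matrix tuple. -/
def FreePoly.eval {d k : ℕ} (p : FreePoly d) (X : Fin d → Matrix (Fin k) (Fin k) ℂ) :
    Matrix (Fin k) (Fin k) ℂ :=
  p.coeff.sum fun w c => c • wordEval X w

/-- `k×k`-matrix-valued free polynomials `M_k(ℂ⟨x⟩)`. -/
abbrev MatPoly (d k : ℕ) := Matrix (Fin k) (Fin k) (FreePoly d)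

/-- Squared ℓ² (Frobenius) norm of the coefficients of a matrix free polynomial. -/
def MatPoly.normSq {d k : ℕ} (F : MatPoly d k) : ℝ := ∑ i, ∑ j, (F i j).normSq

def MatPoly.norm2 {d k : ℕ} (F : MatPoly d k) : ℝ := Real.sqrt F.normSq

def MatPoly.degLE {d k : ℕ} (F : MatPoly d k) (n : ℕ) : Prop := ∀ i j, (F i j).degLE n

/-- Evaluation of a matrix free polynomial at an `m×m` matrix tuple,
`F(X) = Σ_w A_w ⊗ X^w ∈ M_k(ℂ) ⊗ M_m(ℂ)`. -/
def MatPoly.eval {d k m : ℕ} (F : MatPoly d k) (X : Fin d → Matrix (Fin m) (Fin m) ℂ) :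
    Matrix (Fin k × Fin m) (Fin k × Fin m) ℂ :=
  Matrix.of fun p q => ((F p.1 q.1).eval X) p.2 q.2

/-- The homogeneous linear pencil `Ax = A₁x₁ + ⋯ + A_d x_d` as a matrix free polynomial. -/
def pencil {d m : ℕ} (A : Fin d → Matrix (Fin m) (Fin m) ℂ) : MatPoly d m :=
  Matrix.of fun i j => ∑ l, MonoidAlgebra.single (FreeMonoid.of l) (A l i j)

/-- Operator norm of a matrix, acting on Euclidean space. -/
def opNorm {ι : Type} [Fintype ι] [DecidableEq ι] (M : Matrix ι ι ℂ) : ℝ :=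
  ‖Matrix.toEuclideanCLM (𝕜 := ℂ) M‖

/-- `X` is a strict row contraction: `‖X₁X₁* + ⋯ + X_dX_d*‖ < 1`. -/
def IsStrictRowContraction {d k : ℕ} (X : Fin d → Matrix (Fin k) (Fin k) ℂ) : Prop :=
  opNorm (∑ j, X j * (X j)ᴴ) < 1

/-- The column norm `‖A‖_col = ‖Σ Aⱼ*Aⱼ‖^{1/2}`. -/
def colNorm {d m : ℕ} (A : Fin d → Matrix (Fin m) (Fin m) ℂ) : ℝ :=
  Real.sqrt (opNorm (∑ j, (A j)ᴴ * A j))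

/-- The completely positive map `Ψ_X : T ↦ Σ Xⱼ T Xⱼ*`. -/
def Psi {d n : ℕ} (X : Fin d → Matrix (Fin n) (Fin n) ℂ) :
    Module.End ℂ (Matrix (Fin n) (Fin n) ℂ) where
  toFun T := ∑ j, X j * T * (X j)ᴴ
  map_add' T S := by
    simp [Matrix.mul_add, Matrix.add_mul, Finset.sum_add_distrib]
  map_smul' c T := by
    simp [Matrix.mul_smul, Matrix.smul_mul, Finset.smul_sum]

/-- The outer spectral radius `ρ(X)`: the square root of the spectral radius of `Ψ_X`. -/
def outerRadius {d n : ℕ} (X : Fin d → Matrix (Fin n) (Fin n) ℂ) : ℝ :=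
  Real.sqrt (sSup ((fun μ : ℂ => ‖μ‖) '' spectrum ℂ (Psi X)))

/-- The `N × N` dilation `diag(A, I)` of a `k × k` matrix polynomial. -/
def dilate {d k : ℕ} (A : MatPoly d k) (N : ℕ) : MatPoly d N :=
  Matrix.of fun i j =>
    if hi : (i : ℕ) < k then
      (if hj : (j : ℕ) < k then A ⟨i, hi⟩ ⟨j, hj⟩ else 0)
    else if (i : ℕ) = (j : ℕ) then 1 else 0

/-- `A` and `B` (square matrix polynomials of possibly different sizes) are stably
associated: `P · diag(A, I) · Q = diag(B, I)` for some invertible `P, Q ∈ GL_N(ℂ⟨x⟩)`. -/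
def StablyAssociated {d k l : ℕ} (A : MatPoly d k) (B : MatPoly d l) : Prop :=
  ∃ N : ℕ, k ≤ N ∧ l ≤ N ∧ ∃ P Q : MatPoly d N, IsUnit P ∧ IsUnit Q ∧
    P * dilate A N * Q = dilate B N

/-- A tuple of matrices is irreducible if it generates the full matrix algebra. -/
def IrreducibleTuple {d : ℕ} {ι : Type} [Fintype ι] [DecidableEq ι]
    (A : Fin d → Matrix ι ι ℂ) : Prop :=
  Algebra.adjoin ℂ (Set.range A) = ⊤

/-- A regular, non-invertible matrix polynomial is an atom if it is not a product of two
non-invertible matrix polynomials. -/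
def IsAtomMP {d k : ℕ} (F : MatPoly d k) : Prop :=
  IsRegular F ∧ ¬IsUnit F ∧ ∀ G H : MatPoly d k, F = G * H → IsUnit G ∨ IsUnit H

/-- `π_n(Mx) = Σ_{k=0}^n (1 − (k+1)/(n+2)) (Mx)^k`. -/
def piMx {d m : ℕ} (n : ℕ) (M : Fin d → Matrix (Fin m) (Fin m) ℂ) : MatPoly d m :=
  ∑ k ∈ Finset.range (n + 1), (1 - ((k : ℂ) + 1) / ((n : ℂ) + 2)) • pencil M ^ k

namespace AuxPMN
variable {d m : ℕ}

def nsq {m : ℕ} (v : Fin m → ℂ) : ℝ := ∑ k, ‖v k‖ ^ 2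

lemma nsq_nonneg (v : Fin m → ℂ) : 0 ≤ nsq v :=
  Finset.sum_nonneg fun _ _ => by positivity

lemma enorm (v : Fin m → ℂ) : ‖(WithLp.equiv 2 (Fin m → ℂ)).symm v‖ = Real.sqrt (nsq v) := by
  rw [EuclideanSpace.norm_eq]; rfl

lemma star_dot_self (u : Fin m → ℂ) : dotProduct (star u) u = ((nsq u : ℝ) : ℂ) := by
  simp only [dotProduct, nsq, Pi.star_apply]
  push_cast
  refine Finset.sum_congr rfl fun i _ => ?_
  rw [RCLike.star_def, mul_comm, Complex.mul_conj']

lemma cs (a b : Fin m → ℂ) :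
    ‖dotProduct (star a) b‖ ≤ Real.sqrt (nsq a) * Real.sqrt (nsq b) := by
  have h := norm_inner_le_norm (𝕜 := ℂ) ((WithLp.equiv 2 (Fin m → ℂ)).symm a)
    ((WithLp.equiv 2 (Fin m → ℂ)).symm b)
  rw [enorm, enorm] at h
  rw [dotProduct_comm]
  exact h

lemma mulVec_bound (M : Matrix (Fin m) (Fin m) ℂ) (v : Fin m → ℂ) :
    Real.sqrt (nsq (M.mulVec v)) ≤ opNorm M * Real.sqrt (nsq v) := by
  have h := (Matrix.toEuclideanCLM (𝕜 := ℂ) M).le_opNorm ((WithLp.equiv 2 (Fin m → ℂ)).symm v)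
  change ‖(WithLp.equiv 2 (Fin m → ℂ)).symm (M *ᵥ v)‖ ≤ ‖Matrix.toEuclideanCLM (𝕜 := ℂ) M‖ *
    ‖(WithLp.equiv 2 (Fin m → ℂ)).symm v‖ at h
  rwa [enorm, enorm] at h

lemma opNorm_le {c : ℝ} (hc : 0 ≤ c) (M : Matrix (Fin m) (Fin m) ℂ)
    (h : ∀ v : Fin m → ℂ, Real.sqrt (nsq (M.mulVec v)) ≤ c * Real.sqrt (nsq v)) :
    opNorm M ≤ c := by
  refine ContinuousLinearMap.opNorm_le_bound _ hc fun x => ?_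
  have hx : x = (WithLp.equiv 2 (Fin m → ℂ)).symm ((WithLp.equiv 2 (Fin m → ℂ)) x) := rfl
  rw [hx]
  change ‖(WithLp.equiv 2 (Fin m → ℂ)).symm (M *ᵥ (WithLp.equiv 2 (Fin m → ℂ)) x)‖ ≤
    c * ‖(WithLp.equiv 2 (Fin m → ℂ)).symm ((WithLp.equiv 2 (Fin m → ℂ)) x)‖
  rw [enorm, enorm]
  exact h _


def Q (A : Fin d → Matrix (Fin m) (Fin m) ℂ) (v : Fin m → ℂ) : ℝ :=
  ∑ l, nsq ((A l).mulVec v)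

lemma Q_nonneg (A : Fin d → Matrix (Fin m) (Fin m) ℂ) (v : Fin m → ℂ) : 0 ≤ Q A v :=
  Finset.sum_nonneg fun _ _ => nsq_nonneg _

lemma dot_M (A : Fin d → Matrix (Fin m) (Fin m) ℂ) (w v : Fin m → ℂ) :
    dotProduct (star w) ((∑ l, (A l)ᴴ * A l).mulVec v)
      = ∑ l, dotProduct (star ((A l).mulVec w)) ((A l).mulVec v) := by
  have hs : (∑ l, (A l)ᴴ * A l) *ᵥ v = ∑ l, ((A l)ᴴ * A l) *ᵥ v :=
    map_sum (AddMonoidHom.mk' (fun M : Matrix (Fin m) (Fin m) ℂ => M *ᵥ v)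
      (fun a b => Matrix.add_mulVec a b v)) _ _
  have hd : ∀ u : Fin d → (Fin m → ℂ), star w ⬝ᵥ (∑ l, u l) = ∑ l, star w ⬝ᵥ u l := fun u =>
    map_sum (AddMonoidHom.mk' (fun x : Fin m → ℂ => star w ⬝ᵥ x)
      (fun a b => dotProduct_add _ a b)) _ _
  rw [hs, hd]
  refine Finset.sum_congr rfl fun l _ => ?_
  rw [← Matrix.mulVec_mulVec, Matrix.dotProduct_mulVec (star w), ← Matrix.star_mulVec]

lemma dot_self_M (A : Fin d → Matrix (Fin m) (Fin m) ℂ) (v : Fin m → ℂ) :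
    dotProduct (star v) ((∑ l, (A l)ᴴ * A l).mulVec v) = ((Q A v : ℝ) : ℂ) := by
  rw [dot_M, Q]
  push_cast
  exact Finset.sum_congr rfl fun l _ => star_dot_self _

lemma F1 (A : Fin d → Matrix (Fin m) (Fin m) ℂ) (v : Fin m → ℂ) :
    Q A v ≤ opNorm (∑ l, (A l)ᴴ * A l) * nsq v := by
  set M := ∑ l, (A l)ᴴ * A l with hM
  have h1 : Q A v = ‖dotProduct (star v) (M.mulVec v)‖ := by
    rw [dot_self_M, Complex.norm_real, Real.norm_of_nonneg (Q_nonneg A v)]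
  calc Q A v ≤ Real.sqrt (nsq v) * Real.sqrt (nsq (M.mulVec v)) := h1 ▸ cs _ _
    _ ≤ Real.sqrt (nsq v) * (opNorm M * Real.sqrt (nsq v)) := by
        exact mul_le_mul_of_nonneg_left (mulVec_bound M v) (Real.sqrt_nonneg _)
    _ = opNorm M * (Real.sqrt (nsq v) * Real.sqrt (nsq v)) := by ring
    _ = opNorm M * nsq v := by rw [Real.mul_self_sqrt (nsq_nonneg v)]

lemma F2 {c : ℝ} (hc : 0 ≤ c) (A : Fin d → Matrix (Fin m) (Fin m) ℂ)
    (h : ∀ v : Fin m → ℂ, Q A v ≤ c * nsq v) :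
    opNorm (∑ l, (A l)ᴴ * A l) ≤ c := by
  set M := ∑ l, (A l)ᴴ * A l with hM
  have bil : ∀ w v : Fin m → ℂ, ‖dotProduct (star w) (M.mulVec v)‖
      ≤ Real.sqrt (Q A w) * Real.sqrt (Q A v) := by
    intro w v
    rw [dot_M]
    calc ‖∑ l, dotProduct (star ((A l).mulVec w)) ((A l).mulVec v)‖
        ≤ ∑ l, ‖dotProduct (star ((A l).mulVec w)) ((A l).mulVec v)‖ :=
          norm_sum_le _ _
      _ ≤ ∑ l, Real.sqrt (nsq ((A l).mulVec w)) * Real.sqrt (nsq ((A l).mulVec v)) :=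
          Finset.sum_le_sum fun l _ => cs _ _
      _ ≤ Real.sqrt (∑ l, nsq ((A l).mulVec w)) * Real.sqrt (∑ l, nsq ((A l).mulVec v)) :=
          Real.sum_sqrt_mul_sqrt_le _ (fun _ => nsq_nonneg _) (fun _ => nsq_nonneg _)
  refine opNorm_le hc M fun v => ?_
  have h1 : nsq (M.mulVec v) = ‖dotProduct (star (M.mulVec v)) (M.mulVec v)‖ := by
    rw [star_dot_self, Complex.norm_real, Real.norm_of_nonneg (nsq_nonneg _)]
  have h2 : nsq (M.mulVec v) ≤ c * (Real.sqrt (nsq (M.mulVec v)) * Real.sqrt (nsq v)) := by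
    calc nsq (M.mulVec v) ≤ Real.sqrt (Q A (M.mulVec v)) * Real.sqrt (Q A v) := h1 ▸ bil _ _
      _ ≤ Real.sqrt (c * nsq (M.mulVec v)) * Real.sqrt (c * nsq v) := by
          exact mul_le_mul (Real.sqrt_le_sqrt (h _)) (Real.sqrt_le_sqrt (h _))
            (Real.sqrt_nonneg _) (Real.sqrt_nonneg _)
      _ = c * (Real.sqrt (nsq (M.mulVec v)) * Real.sqrt (nsq v)) := by
          rw [Real.sqrt_mul hc, Real.sqrt_mul hc]
          linear_combination (Real.sqrt (nsq (M.mulVec v)) * Real.sqrt (nsq v)) *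
            Real.mul_self_sqrt hc
  rcases eq_or_lt_of_le (Real.sqrt_nonneg (nsq (M.mulVec v))) with h0 | h0
  · rw [← h0]; positivity
  · have h3 : Real.sqrt (nsq (M.mulVec v)) * Real.sqrt (nsq (M.mulVec v))
        ≤ (c * Real.sqrt (nsq v)) * Real.sqrt (nsq (M.mulVec v)) := by
      rw [Real.mul_self_sqrt (nsq_nonneg _)]
      calc nsq (M.mulVec v) ≤ c * (Real.sqrt (nsq (M.mulVec v)) * Real.sqrt (nsq v)) := h2
        _ = (c * Real.sqrt (nsq v)) * Real.sqrt (nsq (M.mulVec v)) := by ring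
    exact le_of_mul_le_mul_right h3 h0

end AuxPMN

namespace AuxPMN
open MonoidAlgebra

lemma cw_inj {d : ℕ} :
    Function.Injective (fun p : Fin d × Word d => FreeMonoid.of p.1 * p.2) := by
  rintro ⟨l, w⟩ ⟨l', w'⟩ h
  simp only at h
  have h' := congrArg FreeMonoid.toList h
  rw [FreeMonoid.toList_of_mul, FreeMonoid.toList_of_mul] at h'
  simp only [List.cons.injEq] at h'
  exact Prod.ext h'.1 (FreeMonoid.toList.injective h'.2)

lemma coeff_single_mul {d : ℕ} (l' l : Fin d) (c : ℂ) (q : FreePoly d) (w : Word d) :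
    (MonoidAlgebra.single (FreeMonoid.of l') c * q).coeff (FreeMonoid.of l * w)
      = if l' = l then c * q.coeff w else 0 := by
  rcases eq_or_ne l' l with rfl | hne
  · rw [if_pos rfl]
    exact MonoidAlgebra.coeff_single_mul_eq_mul_coeff (x := q) _ fun a _ =>
      ⟨fun h => mul_left_cancel h, fun h => by rw [h]⟩
  · rw [if_neg hne]
    refine MonoidAlgebra.single_mul_apply_of_not_exists_mul _ _ ?_
    rintro ⟨a, ha⟩
    have h' := congrArg FreeMonoid.toList ha
    rw [FreeMonoid.toList_of_mul, FreeMonoid.toList_of_mul] at h'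
    exact hne (List.head_eq_of_cons_eq h').symm

instance {d : ℕ} : DecidableEq (Word d) := fun a b =>
  decidable_of_iff (a.toList = b.toList) FreeMonoid.toList.injective.eq_iff

lemma support_pencilMul {d m : ℕ} (A : Fin d → Matrix (Fin m) (Fin m) ℂ) (F : MatPoly d m)
    (i j : Fin m) (s : Finset (Word d)) (hs : ∀ k, (F k j).coeff.support ⊆ s) :
    ((pencil A * F) i j).coeff.support ⊆
      (Finset.univ ×ˢ s).image (fun p : Fin d × Word d => FreeMonoid.of p.1 * p.2) := by
  classical
  rw [Matrix.mul_apply, MonoidAlgebra.coeff_sum]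
  refine Finsupp.support_finset_sum.trans (Finset.biUnion_subset.2 fun k _ => ?_)
  have hp : pencil A i k = ∑ l, MonoidAlgebra.single (FreeMonoid.of l) (A l i k) := rfl
  rw [hp, Finset.sum_mul, MonoidAlgebra.coeff_sum]
  refine Finsupp.support_finset_sum.trans (Finset.biUnion_subset.2 fun l _ => ?_)
  refine (MonoidAlgebra.support_coeff_single_mul_subset _ _ _).trans ?_
  intro u hu
  rw [Finset.mem_image] at hu
  obtain ⟨w, hw, rfl⟩ := hu
  exact Finset.mem_image.2 ⟨(l, w), Finset.mem_product.2 ⟨Finset.mem_univ _, hs k hw⟩, rfl⟩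

lemma coeff_pencilMul {d m : ℕ} (A : Fin d → Matrix (Fin m) (Fin m) ℂ) (F : MatPoly d m)
    (i j : Fin m) (l : Fin d) (w : Word d) :
    ((pencil A * F) i j).coeff (FreeMonoid.of l * w)
      = ((A l).mulVec (fun k => (F k j).coeff w)) i := by
  classical
  rw [Matrix.mul_apply, MonoidAlgebra.coeff_sum, Finsupp.finset_sum_apply]
  have hr : ((A l).mulVec (fun k => (F k j).coeff w)) i = ∑ k, A l i k * (F k j).coeff w := rfl
  rw [hr]
  refine Finset.sum_congr rfl fun k _ => ?_
  have hp : pencil A i k = ∑ l', MonoidAlgebra.single (FreeMonoid.of l') (A l' i k) := rfl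
  rw [hp, Finset.sum_mul, MonoidAlgebra.coeff_sum, Finsupp.finset_sum_apply]
  simp only [coeff_single_mul]
  simp [Finset.sum_ite_eq']

lemma normSq_eq_sum_of_subset {d : ℕ} {p : FreePoly d} {s : Finset (Word d)}
    (h : p.coeff.support ⊆ s) : p.normSq = ∑ w ∈ s, ‖p.coeff w‖ ^ 2 :=
  Finsupp.sum_of_support_subset p.coeff h _ (fun w _ => by simp)

lemma normSq_pencil_mul {d m : ℕ} (A : Fin d → Matrix (Fin m) (Fin m) ℂ) (F : MatPoly d m)
    (s : Finset (Word d)) (hs : ∀ k j, (F k j).coeff.support ⊆ s) :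
    MatPoly.normSq (pencil A * F) = ∑ j, ∑ w ∈ s, Q A (fun k => (F k j).coeff w) := by
  classical
  unfold MatPoly.normSq
  have key : ∀ i j, ((pencil A * F) i j).normSq
      = ∑ l, ∑ w ∈ s, ‖((A l).mulVec (fun k => (F k j).coeff w)) i‖ ^ 2 := by
    intro i j
    rw [normSq_eq_sum_of_subset (support_pencilMul A F i j s (fun k => hs k j))]
    rw [Finset.sum_image (fun p _ q _ h => cw_inj h), Finset.sum_product]
    exact Finset.sum_congr rfl fun l _ => Finset.sum_congr rfl fun w _ => by
      rw [coeff_pencilMul]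
  simp only [key, Q, nsq]
  rw [Finset.sum_comm]
  refine Finset.sum_congr rfl fun j _ => ?_
  rw [Finset.sum_comm]
  refine Eq.trans ?_ (Finset.sum_comm ..)
  exact Finset.sum_congr rfl fun l _ => Finset.sum_comm ..

lemma normSq_agree {d m : ℕ} (F : MatPoly d m) (s : Finset (Word d))
    (hs : ∀ k j, (F k j).coeff.support ⊆ s) :
    MatPoly.normSq F = ∑ j, ∑ w ∈ s, nsq (fun k => (F k j).coeff w) := by
  classical
  unfold MatPoly.normSq
  have key : ∀ k j, (F k j).normSq = ∑ w ∈ s, ‖(F k j).coeff w‖ ^ 2 :=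
    fun k j => normSq_eq_sum_of_subset (hs k j)
  simp only [key, nsq]
  rw [Finset.sum_comm]
  exact Finset.sum_congr rfl fun j _ => Finset.sum_comm ..

end AuxPMN

/-- The left multiplication operator `F ↦ (Ax)F` on `M_m(ℂ⟨x⟩)` has operator norm (with
respect to the ℓ² coefficient norm) exactly `‖A‖_col`. -/
theorem pencil_mult_norm {d m : ℕ} (A : Fin d → Matrix (Fin m) (Fin m) ℂ) :
    (∀ F : MatPoly d m, MatPoly.norm2 (pencil A * F) ≤ colNorm A * MatPoly.norm2 F) ∧
    (∀ C : ℝ, 0 ≤ C →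
      (∀ F : MatPoly d m, MatPoly.norm2 (pencil A * F) ≤ C * MatPoly.norm2 F) →
      colNorm A ≤ C) := by
  classical
  open AuxPMN in
  constructor
  · intro F
    set s : Finset (Word d) :=
      Finset.univ.biUnion (fun kj : Fin m × Fin m => (F kj.1 kj.2).coeff.support) with hsdef
    have hs : ∀ k j, (F k j).coeff.support ⊆ s := fun k j u hu =>
      Finset.mem_biUnion.2 ⟨(k, j), Finset.mem_univ _, hu⟩
    have h1 := normSq_pencil_mul A F s hs
    have h2 := normSq_agree F s hs
    have hle : MatPoly.normSq (pencil A * F)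
        ≤ opNorm (∑ l, (A l)ᴴ * A l) * MatPoly.normSq F := by
      rw [h1, h2, Finset.mul_sum]
      refine Finset.sum_le_sum fun j _ => ?_
      rw [Finset.mul_sum]
      exact Finset.sum_le_sum fun w _ => F1 A _
    have hnn : (0:ℝ) ≤ opNorm (∑ l, (A l)ᴴ * A l) := norm_nonneg _
    calc MatPoly.norm2 (pencil A * F)
        ≤ Real.sqrt (opNorm (∑ l, (A l)ᴴ * A l) * MatPoly.normSq F) :=
          Real.sqrt_le_sqrt hle
      _ = colNorm A * MatPoly.norm2 F := by
          rw [Real.sqrt_mul hnn]; rfl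
  · intro C hC hmult
    have hQ : ∀ v : Fin m → ℂ, Q A v ≤ C ^ 2 * nsq v := by
      intro v
      rcases Nat.eq_zero_or_pos m with hm | hm
      · subst hm
        simp [Q, nsq]
      · set j₀ : Fin m := ⟨0, hm⟩
        set F : MatPoly d m := Matrix.of fun k j =>
          if j = j₀ then MonoidAlgebra.single (1 : Word d) (v k) else 0 with hF
        have hFs : ∀ k j, (F k j).coeff.support ⊆ {(1 : Word d)} := by
          intro k j
          simp only [hF, Matrix.of_apply]
          split
          · exact Finsupp.support_single_subset
          · simp
        have hF1 : ∀ k j, (F k j).coeff (1 : Word d) = if j = j₀ then v k else 0 := by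
          intro k j
          simp only [hF, Matrix.of_apply]
          split <;> simp [MonoidAlgebra.coeff_single]
        have e1 : MatPoly.normSq (pencil A * F) = Q A v := by
          rw [normSq_pencil_mul A F _ hFs]
          rw [Finset.sum_eq_single j₀]
          · rw [Finset.sum_singleton]
            congr 1
            funext k
            rw [hF1, if_pos rfl]
          · intro j _ hj
            rw [Finset.sum_singleton]
            have : (fun k => (F k j).coeff (1 : Word d)) = (0 : Fin m → ℂ) := by
              funext k; rw [hF1, if_neg hj]; rfl
            rw [this]
            simp [Q, nsq, Matrix.mulVec_zero]
          · intro h; exact absurd (Finset.mem_univ _) h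
        have e2 : MatPoly.normSq F = nsq v := by
          rw [normSq_agree F _ hFs]
          rw [Finset.sum_eq_single j₀]
          · rw [Finset.sum_singleton]
            congr 1
            funext k
            rw [hF1, if_pos rfl]
          · intro j _ hj
            rw [Finset.sum_singleton]
            have : (fun k => (F k j).coeff (1 : Word d)) = (0 : Fin m → ℂ) := by
              funext k; rw [hF1, if_neg hj]; rfl
            rw [this]
            simp [nsq]
          · intro h; exact absurd (Finset.mem_univ _) h
        have h3 := hmult F
        rw [MatPoly.norm2, MatPoly.norm2, e1, e2] at h3
        have h4 : Q A v ≤ (C * Real.sqrt (nsq v)) ^ 2 := by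
          have := Real.sq_sqrt (Q_nonneg A v)
          nlinarith [Real.sqrt_nonneg (Q A v), Real.sqrt_nonneg (nsq v),
            Real.sq_sqrt (Q_nonneg A v), Real.sq_sqrt (nsq_nonneg v)]
        calc Q A v ≤ (C * Real.sqrt (nsq v)) ^ 2 := h4
          _ = C ^ 2 * Real.sqrt (nsq v) ^ 2 := by ring
          _ = C ^ 2 * nsq v := by rw [Real.sq_sqrt (nsq_nonneg v)]
    have h5 : opNorm (∑ l, (A l)ᴴ * A l) ≤ C ^ 2 := F2 (by positivity) A hQ
    calc colNorm A ≤ Real.sqrt (C ^ 2) := Real.sqrt_le_sqrt h5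
      _ = C := Real.sqrt_sq hC
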